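/- Let ℓ ≥ 2 and let k be an even integer with 2 ≤ k ≤ ℓ. In ℝ^ℓ, let Δ be the root system of type B_ℓ, let Δ₁ = {e_i − e_j : 1 ≤ i ≤ k < j ≤ ℓ} ∪ {e_i : 1 ≤ i ≤ k} ∪ {e_i + e_j : 1 ≤ i ≤ k < j ≤ ℓ}, and let Ψ₂ = {e_{2s−1} + e_{2s} : 1 ≤ s ≤ k/2}. Then: (i) Ψ₂ is a strongly orthogonal set in Δ, i.e. for any two distinct β, β' ∈ Ψ₂ neither β + β' nor β − β' lies in Δ; and (ii) for every α ∈ Δ₁ there exists exactly one β ∈ Δ₁ such that α + β ∈ Ψ₂. -/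

import Mathlib

/-- The `j`-th standard basis vector of `ℝ^ℓ` (1-indexed: `e ℓ 1, …, e ℓ ℓ`). -/
def e (ℓ : ℕ) (j : ℕ) : Fin ℓ → ℝ := fun s => if (s : ℕ) + 1 = j then 1 else 0

/-- The root system of type `B_ℓ`: `{±e_i ± e_j : i < j} ∪ {±e_i}`. -/
def DeltaB (ℓ : ℕ) : Set (Fin ℓ → ℝ) :=
  {v | ∃ i j : ℕ, 1 ≤ i ∧ i < j ∧ j ≤ ℓ ∧
      (v = e ℓ i + e ℓ j ∨ v = e ℓ i - e ℓ j ∨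
       v = -e ℓ i + e ℓ j ∨ v = -e ℓ i - e ℓ j)} ∪
  {v | ∃ i : ℕ, 1 ≤ i ∧ i ≤ ℓ ∧ (v = e ℓ i ∨ v = -e ℓ i)}

/-- Level-one roots of the gradation of `B_ℓ` associated to the simple root `α_k`:
`{e_i − e_j : 1 ≤ i ≤ k < j ≤ ℓ} ∪ {e_i : 1 ≤ i ≤ k} ∪ {e_i + e_j : 1 ≤ i ≤ k < j ≤ ℓ}`. -/
def Delta1B (ℓ k : ℕ) : Set (Fin ℓ → ℝ) :=
  {v | ∃ i j : ℕ, 1 ≤ i ∧ i ≤ k ∧ k < j ∧ j ≤ ℓ ∧ v = e ℓ i - e ℓ j} ∪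
  {v | ∃ i : ℕ, 1 ≤ i ∧ i ≤ k ∧ v = e ℓ i} ∪
  {v | ∃ i j : ℕ, 1 ≤ i ∧ i ≤ k ∧ k < j ∧ j ≤ ℓ ∧ v = e ℓ i + e ℓ j}

/-- `Ψ₂ = {e_{2s−1} + e_{2s} : 1 ≤ s ≤ k/2}`. -/
def Psi2B (ℓ k : ℕ) : Set (Fin ℓ → ℝ) :=
  {v | ∃ s : ℕ, 1 ≤ s ∧ 2 * s ≤ k ∧ v = e ℓ (2 * s - 1) + e ℓ (2 * s)}

def co (ℓ x : ℕ) (h1 : 1 ≤ x) (h2 : x ≤ ℓ) : Fin ℓ := ⟨x - 1, by omega⟩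

lemma e_co (ℓ j x : ℕ) (h1 : 1 ≤ x) (h2 : x ≤ ℓ) :
    e ℓ j (co ℓ x h1 h2) = if x = j then 1 else 0 := by
  dsimp only [e, co]
  split_ifs <;> first | rfl | (exfalso; omega)

lemma pick4 (a b c d i j : ℕ)
    (h : a ≠ b ∧ a ≠ c ∧ a ≠ d ∧ b ≠ c ∧ b ≠ d ∧ c ≠ d) :
    ∃ x, (x = a ∨ x = b ∨ x = c ∨ x = d) ∧ x ≠ i ∧ x ≠ j := by
  by_cases h1 : a ≠ i ∧ a ≠ j
  · exact ⟨a, Or.inl rfl, h1.1, h1.2⟩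
  by_cases h2 : b ≠ i ∧ b ≠ j
  · exact ⟨b, Or.inr (Or.inl rfl), h2.1, h2.2⟩
  by_cases h3 : c ≠ i ∧ c ≠ j
  · exact ⟨c, Or.inr (Or.inr (Or.inl rfl)), h3.1, h3.2⟩
  push_neg at h1 h2 h3
  exact ⟨d, Or.inr (Or.inr (Or.inr rfl)), by omega, by omega⟩

lemma notin_aux (ℓ : ℕ) (v : Fin ℓ → ℝ) (s t : ℕ) (hs1 : 1 ≤ s) (ht1 : 1 ≤ t)
    (hst : s ≠ t) (hsℓ : 2 * s ≤ ℓ) (htℓ : 2 * t ≤ ℓ)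
    (hval : ∀ x (h1 : 1 ≤ x) (h2 : x ≤ ℓ),
      (x = 2 * s - 1 ∨ x = 2 * s ∨ x = 2 * t - 1 ∨ x = 2 * t) →
      v (co ℓ x h1 h2) = 1 ∨ v (co ℓ x h1 h2) = -1) :
    v ∉ DeltaB ℓ := by
  intro hv
  simp only [DeltaB, Set.mem_union, Set.mem_setOf_eq] at hv
  rcases hv with ⟨i, j, hi, hij, hjl, hc⟩ | ⟨i, hi, hil, hc⟩
  · obtain ⟨x, hx, hxi, hxj⟩ := pick4 (2*s-1) (2*s) (2*t-1) (2*t) i j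
      ⟨by omega, by omega, by omega, by omega, by omega, by omega⟩
    have h1 : 1 ≤ x := by omega
    have h2 : x ≤ ℓ := by omega
    have hv1 := hval x h1 h2 hx
    rcases hc with rfl | rfl | rfl | rfl <;>
      (simp only [Pi.add_apply, Pi.sub_apply, Pi.neg_apply, e_co] at hv1;
       split_ifs at hv1 <;> first | omega | norm_num at hv1)
  · obtain ⟨x, hx, hxi, -⟩ := pick4 (2*s-1) (2*s) (2*t-1) (2*t) i i
      ⟨by omega, by omega, by omega, by omega, by omega, by omega⟩
    have h1 : 1 ≤ x := by omega
    have h2 : x ≤ ℓ := by omega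
    have hv1 := hval x h1 h2 hx
    rcases hc with rfl | rfl <;>
      (simp only [Pi.neg_apply, e_co] at hv1;
       split_ifs at hv1 <;> first | omega | norm_num at hv1)

lemma key_aux (ℓ k : ℕ) (hkℓ : k ≤ ℓ) (α y : Fin ℓ → ℝ) (i t : ℕ)
    (hi1 : 1 ≤ i) (hik : i ≤ k)
    (hα : α (co ℓ i hi1 (le_trans hik hkℓ)) = 1)
    (hy : y ∈ Delta1B ℓ k)
    (hty : α + y = e ℓ (2 * t - 1) + e ℓ (2 * t)) :
    i = 2 * t - 1 ∨ i = 2 * t := by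
  simp only [Delta1B, Set.mem_union, Set.mem_setOf_eq] at hy
  have ec := congrFun hty (co ℓ i hi1 (le_trans hik hkℓ))
  rw [Pi.add_apply, hα] at ec
  rcases hy with (⟨i', j', hi'1, hi'k, hkj', hj'l, rfl⟩ | ⟨i', hi'1, hi'k, rfl⟩) |
      ⟨i', j', hi'1, hi'k, hkj', hj'l, rfl⟩ <;>
    (simp only [Pi.add_apply, Pi.sub_apply, e_co] at ec;
     split_ifs at ec <;> first | omega | norm_num at ec)

/-- Type `B_ℓ`, `k` even: `Ψ₂` is strongly orthogonal in `Δ`, and every root `α ∈ Δ₁`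
has exactly one pairing `β ∈ Δ₁` with `α + β ∈ Ψ₂`. -/
theorem stmt9 (ℓ k : ℕ) (hℓ : 2 ≤ ℓ) (hk2 : 2 ≤ k) (hkℓ : k ≤ ℓ) (hkeven : Even k) :
    (∀ β ∈ Psi2B ℓ k, ∀ β' ∈ Psi2B ℓ k, β ≠ β' →
      β + β' ∉ DeltaB ℓ ∧ β - β' ∉ DeltaB ℓ) ∧
    (∀ α ∈ Delta1B ℓ k, ∃! β, β ∈ Delta1B ℓ k ∧ α + β ∈ Psi2B ℓ k) := by
  obtain ⟨m, hm⟩ := hkeven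
  constructor
  · rintro β hβ β' hβ' hne
    simp only [Psi2B, Set.mem_setOf_eq] at hβ hβ'
    obtain ⟨s, hs1, hsk, rfl⟩ := hβ
    obtain ⟨t, ht1, htk, rfl⟩ := hβ'
    have hst : s ≠ t := by rintro rfl; exact hne rfl
    constructor
    · apply notin_aux ℓ _ s t hs1 ht1 hst (by omega) (by omega)
      intro x h1 h2 hx
      simp only [Pi.add_apply, e_co]
      split_ifs <;> first | (exfalso; omega) | norm_num
    · apply notin_aux ℓ _ s t hs1 ht1 hst (by omega) (by omega)
      intro x h1 h2 hx
      simp only [Pi.sub_apply, Pi.add_apply, e_co]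
      split_ifs <;> first | (exfalso; omega) | norm_num
  · intro α hα
    simp only [Delta1B, Set.mem_union, Set.mem_setOf_eq] at hα
    rcases hα with (⟨i, j, hi1, hik, hkj, hjl, rfl⟩ | ⟨i, hi1, hik, rfl⟩) |
        ⟨i, j, hi1, hik, hkj, hjl, rfl⟩
    · -- α = e i - e j
      obtain ⟨q, s, hq1, hqk, hqi, hs1, hsk, hpair⟩ :
          ∃ q s, 1 ≤ q ∧ q ≤ k ∧ q ≠ i ∧ 1 ≤ s ∧ 2 * s ≤ k ∧
            ((i = 2 * s - 1 ∧ q = 2 * s) ∨ (i = 2 * s ∧ q = 2 * s - 1)) := by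
        rcases Nat.even_or_odd i with ⟨a, ha⟩ | ⟨a, ha⟩
        · exact ⟨i - 1, a, by omega, by omega, by omega, by omega, by omega, by omega⟩
        · exact ⟨i + 1, a + 1, by omega, by omega, by omega, by omega, by omega, by omega⟩
      have hsum : (e ℓ i - e ℓ j) + (e ℓ q + e ℓ j) = e ℓ (2 * s - 1) + e ℓ (2 * s) := by
        funext p
        simp only [Pi.add_apply, Pi.sub_apply, e]
        split_ifs <;> first | (exfalso; omega) | norm_num
      refine ⟨e ℓ q + e ℓ j, ⟨?_, ?_⟩, ?_⟩
      · simp only [Delta1B, Set.mem_union, Set.mem_setOf_eq]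
        exact Or.inr ⟨q, j, hq1, hqk, hkj, hjl, rfl⟩
      · simp only [Psi2B, Set.mem_setOf_eq]
        exact ⟨s, hs1, hsk, hsum⟩
      · rintro y ⟨hy1, hy2⟩
        simp only [Psi2B, Set.mem_setOf_eq] at hy2
        obtain ⟨t, ht1, htk, hty⟩ := hy2
        have hα1 : (e ℓ i - e ℓ j) (co ℓ i hi1 (le_trans hik hkℓ)) = 1 := by
          simp only [Pi.sub_apply, e_co]
          split_ifs <;> first | (exfalso; omega) | norm_num
        have key := key_aux ℓ k hkℓ _ y i t hi1 hik hα1 hy1 hty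
        have hts : t = s := by omega
        calc y = (e ℓ i - e ℓ j) + y - (e ℓ i - e ℓ j) := by abel
          _ = (e ℓ (2 * t - 1) + e ℓ (2 * t)) - (e ℓ i - e ℓ j) := by rw [hty]
          _ = (e ℓ (2 * s - 1) + e ℓ (2 * s)) - (e ℓ i - e ℓ j) := by rw [hts]
          _ = ((e ℓ i - e ℓ j) + (e ℓ q + e ℓ j)) - (e ℓ i - e ℓ j) := by rw [hsum]
          _ = e ℓ q + e ℓ j := by abel
    · -- α = e i
      obtain ⟨q, s, hq1, hqk, hqi, hs1, hsk, hpair⟩ :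
          ∃ q s, 1 ≤ q ∧ q ≤ k ∧ q ≠ i ∧ 1 ≤ s ∧ 2 * s ≤ k ∧
            ((i = 2 * s - 1 ∧ q = 2 * s) ∨ (i = 2 * s ∧ q = 2 * s - 1)) := by
        rcases Nat.even_or_odd i with ⟨a, ha⟩ | ⟨a, ha⟩
        · exact ⟨i - 1, a, by omega, by omega, by omega, by omega, by omega, by omega⟩
        · exact ⟨i + 1, a + 1, by omega, by omega, by omega, by omega, by omega, by omega⟩
      have hsum : e ℓ i + e ℓ q = e ℓ (2 * s - 1) + e ℓ (2 * s) := by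
        funext p
        simp only [Pi.add_apply, e]
        split_ifs <;> first | (exfalso; omega) | norm_num
      refine ⟨e ℓ q, ⟨?_, ?_⟩, ?_⟩
      · simp only [Delta1B, Set.mem_union, Set.mem_setOf_eq]
        exact Or.inl (Or.inr ⟨q, hq1, hqk, rfl⟩)
      · simp only [Psi2B, Set.mem_setOf_eq]
        exact ⟨s, hs1, hsk, hsum⟩
      · rintro y ⟨hy1, hy2⟩
        simp only [Psi2B, Set.mem_setOf_eq] at hy2
        obtain ⟨t, ht1, htk, hty⟩ := hy2
        have hα1 : (e ℓ i) (co ℓ i hi1 (le_trans hik hkℓ)) = 1 := by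
          simp only [e_co]
          split_ifs <;> first | (exfalso; omega) | norm_num
        have key := key_aux ℓ k hkℓ _ y i t hi1 hik hα1 hy1 hty
        have hts : t = s := by omega
        calc y = e ℓ i + y - e ℓ i := by abel
          _ = (e ℓ (2 * t - 1) + e ℓ (2 * t)) - e ℓ i := by rw [hty]
          _ = (e ℓ (2 * s - 1) + e ℓ (2 * s)) - e ℓ i := by rw [hts]
          _ = (e ℓ i + e ℓ q) - e ℓ i := by rw [hsum]
          _ = e ℓ q := by abel
    · -- α = e i + e j
      obtain ⟨q, s, hq1, hqk, hqi, hs1, hsk, hpair⟩ :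
          ∃ q s, 1 ≤ q ∧ q ≤ k ∧ q ≠ i ∧ 1 ≤ s ∧ 2 * s ≤ k ∧
            ((i = 2 * s - 1 ∧ q = 2 * s) ∨ (i = 2 * s ∧ q = 2 * s - 1)) := by
        rcases Nat.even_or_odd i with ⟨a, ha⟩ | ⟨a, ha⟩
        · exact ⟨i - 1, a, by omega, by omega, by omega, by omega, by omega, by omega⟩
        · exact ⟨i + 1, a + 1, by omega, by omega, by omega, by omega, by omega, by omega⟩
      have hsum : (e ℓ i + e ℓ j) + (e ℓ q - e ℓ j) = e ℓ (2 * s - 1) + e ℓ (2 * s) := by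
        funext p
        simp only [Pi.add_apply, Pi.sub_apply, e]
        split_ifs <;> first | (exfalso; omega) | norm_num
      refine ⟨e ℓ q - e ℓ j, ⟨?_, ?_⟩, ?_⟩
      · simp only [Delta1B, Set.mem_union, Set.mem_setOf_eq]
        exact Or.inl (Or.inl ⟨q, j, hq1, hqk, hkj, hjl, rfl⟩)
      · simp only [Psi2B, Set.mem_setOf_eq]
        exact ⟨s, hs1, hsk, hsum⟩
      · rintro y ⟨hy1, hy2⟩
        simp only [Psi2B, Set.mem_setOf_eq] at hy2
        obtain ⟨t, ht1, htk, hty⟩ := hy2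
        have hα1 : (e ℓ i + e ℓ j) (co ℓ i hi1 (le_trans hik hkℓ)) = 1 := by
          simp only [Pi.add_apply, e_co]
          split_ifs <;> first | (exfalso; omega) | norm_num
        have key := key_aux ℓ k hkℓ _ y i t hi1 hik hα1 hy1 hty
        have hts : t = s := by omega
        calc y = (e ℓ i + e ℓ j) + y - (e ℓ i + e ℓ j) := by abel
          _ = (e ℓ (2 * t - 1) + e ℓ (2 * t)) - (e ℓ i + e ℓ j) := by rw [hty]
          _ = (e ℓ (2 * s - 1) + e ℓ (2 * s)) - (e ℓ i + e ℓ j) := by rw [hts]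
          _ = ((e ℓ i + e ℓ j) + (e ℓ q - e ℓ j)) - (e ℓ i + e ℓ j) := by rw [hsum]
          _ = e ℓ q - e ℓ j := by abel
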